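/- Skew-self-adjointness of the subprincipal correction: let H be a complex Hilbert space and let P₀, Q₀ : ℝ → B(H) and P₁, Q₁ : ℝ² → B(H) be differentiable maps into the bounded operators on H such that, for all ξ ∈ ℝ and (s,ξ) ∈ ℝ²: P₀(ξ) and Q₀(ξ) are self-adjoint; P₁(s,ξ) and Q₁(s,ξ) are skew-adjoint (i.e. X* = −X); P₀(ξ)Q₀(ξ) = Q₀(ξ)P₀(ξ) = Id; and Q₁(s,ξ)P₀(ξ) + Q₀(ξ)P₁(s,ξ) = 0. Define 𝒞(s,ξ) := (2i)^{−1} ( (dQ₀/dξ)(ξ) · (∂P₁/∂s)(s,ξ) − (∂Q₁/∂s)(s,ξ) · (dP₀/dξ)(ξ) ) · Q₀(ξ). Then 𝒞(s,ξ) is skew-self-adjoint: 𝒞(s,ξ)* = −𝒞(s,ξ) for all (s,ξ). -/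

import Mathlib

open ContinuousLinearMap

noncomputable section

/-- Skew-self-adjointness of the subprincipal correction term
`𝒞(s,ξ) = (2i)⁻¹ ( (dQ₀/dξ)·(∂P₁/∂s) − (∂Q₁/∂s)·(dP₀/dξ) ) · Q₀(ξ)`
built from Grushin symbols whose principal part does not depend on `s`. -/
theorem skew_adjoint_subprincipal_correction
    {H : Type*} [NormedAddCommGroup H] [InnerProductSpace ℂ H] [CompleteSpace H]
    (P₀ Q₀ : ℝ → H →L[ℂ] H) (P₁ Q₁ : ℝ × ℝ → H →L[ℂ] H)
    (hP₀ : Differentiable ℝ P₀) (hQ₀ : Differentiable ℝ Q₀)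
    (hP₁ : Differentiable ℝ P₁) (hQ₁ : Differentiable ℝ Q₁)
    (hP₀sa : ∀ ξ : ℝ, ContinuousLinearMap.adjoint (P₀ ξ) = P₀ ξ)
    (hQ₀sa : ∀ ξ : ℝ, ContinuousLinearMap.adjoint (Q₀ ξ) = Q₀ ξ)
    (hP₁sk : ∀ p : ℝ × ℝ, ContinuousLinearMap.adjoint (P₁ p) = -P₁ p)
    (hQ₁sk : ∀ p : ℝ × ℝ, ContinuousLinearMap.adjoint (Q₁ p) = -Q₁ p)
    (hPQ : ∀ ξ : ℝ, (P₀ ξ).comp (Q₀ ξ) = ContinuousLinearMap.id ℂ H)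
    (hQP : ∀ ξ : ℝ, (Q₀ ξ).comp (P₀ ξ) = ContinuousLinearMap.id ℂ H)
    (hcanc : ∀ s ξ : ℝ,
      (Q₁ (s, ξ)).comp (P₀ ξ) + (Q₀ ξ).comp (P₁ (s, ξ)) = 0) :
    ∀ s ξ : ℝ,
      ContinuousLinearMap.adjoint
          (((2 * Complex.I)⁻¹ : ℂ) •
            (((deriv Q₀ ξ).comp (deriv (fun s' => P₁ (s', ξ)) s) -
              (deriv (fun s' => Q₁ (s', ξ)) s).comp (deriv P₀ ξ)).comp (Q₀ ξ)))
        = -(((2 * Complex.I)⁻¹ : ℂ) •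
            (((deriv Q₀ ξ).comp (deriv (fun s' => P₁ (s', ξ)) s) -
              (deriv (fun s' => Q₁ (s', ξ)) s).comp (deriv P₀ ξ)).comp (Q₀ ξ))) := by
  intro s ξ
  -- notation
  set A : H →L[ℂ] H := deriv Q₀ ξ with hA
  set B : H →L[ℂ] H := deriv (fun s' => P₁ (s', ξ)) s with hB
  set C : H →L[ℂ] H := deriv (fun s' => Q₁ (s', ξ)) s with hC
  set D : H →L[ℂ] H := deriv P₀ ξ with hD
  -- differentiability of slices
  have hslice : ∀ x : ℝ, DifferentiableAt ℝ (fun s' : ℝ => (s', ξ)) x := fun x =>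
    differentiableAt_id.prodMk (differentiableAt_const ξ)
  have hP₁s : HasDerivAt (fun s' => P₁ (s', ξ)) B s := by
    rw [hB]
    exact (((hP₁ (s, ξ)).comp s (hslice s)).hasDerivAt)
  have hQ₁s : HasDerivAt (fun s' => Q₁ (s', ξ)) C s := by
    rw [hC]
    exact (((hQ₁ (s, ξ)).comp s (hslice s)).hasDerivAt)
  have hP₀d : HasDerivAt P₀ D ξ := (hP₀ ξ).hasDerivAt
  have hQ₀d : HasDerivAt Q₀ A ξ := (hQ₀ ξ).hasDerivAt
  -- star facts (star = adjoint on B(H))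
  have sA : star A = A := by
    have h1 : HasDerivAt (fun x => star (Q₀ x)) (star A) ξ := hQ₀d.star
    have h2 : (fun x => star (Q₀ x)) = Q₀ := by
      funext x; rw [star_eq_adjoint, hQ₀sa]
    rw [h2] at h1
    exact h1.unique hQ₀d
  have sD : star D = D := by
    have h1 : HasDerivAt (fun x => star (P₀ x)) (star D) ξ := hP₀d.star
    have h2 : (fun x => star (P₀ x)) = P₀ := by
      funext x; rw [star_eq_adjoint, hP₀sa]
    rw [h2] at h1
    exact h1.unique hP₀d
  have sB : star B = -B := by
    have h1 : HasDerivAt (fun s' => star (P₁ (s', ξ))) (star B) s := hP₁s.star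
    have h2 : (fun s' => star (P₁ (s', ξ))) = fun s' => -(P₁ (s', ξ)) := by
      funext x; rw [star_eq_adjoint, hP₁sk]
    rw [h2] at h1
    exact h1.unique hP₁s.neg
  have sC : star C = -C := by
    have h1 : HasDerivAt (fun s' => star (Q₁ (s', ξ))) (star C) s := hQ₁s.star
    have h2 : (fun s' => star (Q₁ (s', ξ))) = fun s' => -(Q₁ (s', ξ)) := by
      funext x; rw [star_eq_adjoint, hQ₁sk]
    rw [h2] at h1
    exact h1.unique hQ₁s.neg
  -- algebra relations from differentiating the identities
  have hone : ∀ x : ℝ, P₀ x * Q₀ x = 1 := fun x => by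
    rw [ContinuousLinearMap.mul_def, hPQ]; rfl
  have hone' : ∀ x : ℝ, Q₀ x * P₀ x = 1 := fun x => by
    rw [ContinuousLinearMap.mul_def, hQP]; rfl
  have hPA : P₀ ξ * A = -(D * Q₀ ξ) := by
    have h1 : HasDerivAt (fun x => P₀ x * Q₀ x) (D * Q₀ ξ + P₀ ξ * A) ξ :=
      hP₀d.mul hQ₀d
    have h2 : (fun x => P₀ x * Q₀ x) = fun _ => (1 : H →L[ℂ] H) := funext hone
    rw [h2] at h1
    exact eq_neg_of_add_eq_zero_right (h1.unique (hasDerivAt_const ξ 1))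
  have hQB : Q₀ ξ * B = -(C * P₀ ξ) := by
    have h1 : HasDerivAt (fun s' => Q₁ (s', ξ) * P₀ ξ + Q₀ ξ * P₁ (s', ξ))
        (C * P₀ ξ + Q₀ ξ * B) s := by
      have hc : HasDerivAt (fun s' => Q₁ (s', ξ) * P₀ ξ) (C * P₀ ξ) s := by
        exact hQ₁s.mul_const (P₀ ξ)
      have hb : HasDerivAt (fun s' => Q₀ ξ * P₁ (s', ξ)) (Q₀ ξ * B) s := by
        exact hP₁s.const_mul (Q₀ ξ)
      exact hc.add hb
    have h2 : (fun s' => Q₁ (s', ξ) * P₀ ξ + Q₀ ξ * P₁ (s', ξ))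
        = fun _ => (0 : H →L[ℂ] H) := by
      funext x
      rw [ContinuousLinearMap.mul_def, ContinuousLinearMap.mul_def]
      exact hcanc x ξ
    rw [h2] at h1
    have h3 := h1.unique (hasDerivAt_const s 0)
    exact eq_neg_of_add_eq_zero_right h3
  -- key self-adjointness of M := (A*B - C*D)*Q₀
  set M : H →L[ℂ] H := (A * B - C * D) * Q₀ ξ with hM
  have hABQ : A * B * Q₀ ξ = Q₀ ξ * (D * C) := by
    have e1 : A * B = (A * P₀ ξ) * (Q₀ ξ * B) := by
      rw [mul_assoc, ← mul_assoc (P₀ ξ) (Q₀ ξ) B, hone, one_mul]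
    have hAP : A * P₀ ξ = -(Q₀ ξ * D) := by
      have h1 : HasDerivAt (fun x => Q₀ x * P₀ x) (A * P₀ ξ + Q₀ ξ * D) ξ :=
        hQ₀d.mul hP₀d
      have h2 : (fun x => Q₀ x * P₀ x) = fun _ => (1 : H →L[ℂ] H) := funext hone'
      rw [h2] at h1
      exact eq_neg_of_add_eq_zero_left (h1.unique (hasDerivAt_const ξ 1))
    calc A * B * Q₀ ξ = (A * P₀ ξ) * (Q₀ ξ * B) * Q₀ ξ := by rw [← e1]
      _ = (-(Q₀ ξ * D)) * (-(C * P₀ ξ)) * Q₀ ξ := by rw [hAP, hQB]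
      _ = Q₀ ξ * (D * C) * (P₀ ξ * Q₀ ξ) := by noncomm_ring
      _ = Q₀ ξ * (D * C) := by rw [hone, mul_one]
  have hQBA : Q₀ ξ * (B * A) = C * D * Q₀ ξ := by
    calc Q₀ ξ * (B * A) = (Q₀ ξ * B) * A := by rw [mul_assoc]
      _ = (-(C * P₀ ξ)) * A := by rw [hQB]
      _ = -(C * (P₀ ξ * A)) := by noncomm_ring
      _ = -(C * (-(D * Q₀ ξ))) := by rw [hPA]
      _ = C * D * Q₀ ξ := by noncomm_ring
  have hMsa : star M = M := by
    have : star M = Q₀ ξ * (star B * star A - star D * star C) := by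
      rw [hM]
      simp only [star_mul, star_sub]
      rw [star_eq_adjoint (Q₀ ξ), hQ₀sa]
    rw [this, sA, sB, sC, sD]
    have h4 : Q₀ ξ * (-B * A - D * -C) = Q₀ ξ * (D * C) - Q₀ ξ * (B * A) := by
      noncomm_ring
    rw [h4, hQBA, ← hABQ, hM]
    noncomm_ring
  -- conclude
  have hMcomp : ((A.comp B - C.comp D).comp (Q₀ ξ)) = M := by
    rw [hM, ← ContinuousLinearMap.mul_def, ← ContinuousLinearMap.mul_def,
      ← ContinuousLinearMap.mul_def]
  rw [hMcomp, ← star_eq_adjoint, star_smul, hMsa]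
  have hstar : star ((2 * Complex.I)⁻¹ : ℂ) = -((2 * Complex.I)⁻¹ : ℂ) := by
    simp [Complex.ext_iff]
  rw [hstar, neg_smul]
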